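/- The consecutive patterns 211 and 221 are equidistributed on 𝓕_n for every n ≥ 1: for all n ≥ 1 and all k ≥ 0, the number of π ∈ 𝓕_n with #211(π) = k equals the number of π ∈ 𝓕_n with #221(π) = k. -/

import Mathlib

open scoped BigOperators

/-- `w` is a Catalan word: it is nonempty, starts with `1`, and each subsequent
letter lies between `1` and the previous letter plus one. -/
def IsCatalan (w : List ℕ) : Prop :=
  w ≠ [] ∧ w.getD 0 0 = 1 ∧
    ∀ i, i + 1 < w.length →
      1 ≤ w.getD (i + 1) 0 ∧ w.getD (i + 1) 0 ≤ w.getD i 0 + 1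

/-- `i` is the starting index of a maximal weakly increasing run of `w`. -/
def RunStart (w : List ℕ) (i : ℕ) : Prop :=
  i < w.length ∧ (i = 0 ∨ w.getD i 0 < w.getD (i - 1) 0)

/-- `w` is flattened: the first letters of its increasing runs, read left to
right, form a weakly nondecreasing sequence. -/
def IsFlattened (w : List ℕ) : Prop :=
  ∀ i j, RunStart w i → RunStart w j → i ≤ j → w.getD i 0 ≤ w.getD j 0

/-- The set of flattened Catalan words of length `n`. -/
def FlatCat (n : ℕ) : Set (List ℕ) :=
  {w | w.length = n ∧ IsCatalan w ∧ IsFlattened w}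

/-- `i` is the starting index of an occurrence of the consecutive pattern `τ`
in the word `w`, i.e. the factor of `w` of length `|τ|` starting at `i` is
order-isomorphic to `τ`. -/
def OccAt (τ w : List ℕ) (i : ℕ) : Prop :=
  i + τ.length ≤ w.length ∧
    ∀ s < τ.length, ∀ t < τ.length,
      (w.getD (i + s) 0 < w.getD (i + t) 0 ↔ τ.getD s 0 < τ.getD t 0)

/-- The number of occurrences of the consecutive pattern `τ` in `w`. -/
noncomputable def numOcc (τ w : List ℕ) : ℕ :=
  Set.ncard {i | OccAt τ w i}

/-- The number of distinct letters in the terminal (rightmost) increasing run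
of `w`, i.e. in the longest weakly increasing suffix of `w`. -/
noncomputable def trun (w : List ℕ) : ℕ :=
  ((w.drop (sInf {i | List.Chain' (· ≤ ·) (w.drop i)})).toFinset).card

/-- The total number of occurrences of the consecutive pattern `τ` over all
flattened Catalan words of length `n`. -/
noncomputable def tot (n : ℕ) (τ : List ℕ) : ℕ :=
  ∑ᶠ w ∈ FlatCat n, numOcc τ w

/- ## counting part -/

def c221 : List ℕ → ℕ
  | a :: b :: c :: t => (if a = b ∧ c < b then 1 else 0) + c221 (b :: c :: t)
  | _ => 0

def c211 : List ℕ → ℕ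
  | a :: b :: c :: t => (if b = c ∧ b < a then 1 else 0) + c211 (b :: c :: t)
  | _ => 0

lemma occAt221_iff (w : List ℕ) (i : ℕ) :
    OccAt [2,2,1] w i ↔ i + 3 ≤ w.length ∧ w.getD i 0 = w.getD (i+1) 0 ∧
      w.getD (i+2) 0 < w.getD (i+1) 0 := by
  simp only [List.getD_eq_getElem?_getD]
  constructor
  · rintro ⟨hl, h⟩
    refine ⟨by simpa using hl, ?_, ?_⟩
    · have h01 := h 0 (by norm_num) 1 (by norm_num)
      have h10 := h 1 (by norm_num) 0 (by norm_num)
      simp [List.getD_eq_getElem?_getD] at h01 h10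
      omega
    · have h21 := h 2 (by norm_num) 1 (by norm_num)
      simp [List.getD_eq_getElem?_getD] at h21
      omega
  · rintro ⟨hl, h1, h2⟩
    refine ⟨by simpa using hl, ?_⟩
    intro s hs t ht
    simp only [List.length_cons, List.length_nil] at hs ht
    interval_cases s <;> interval_cases t <;>
      simp only [List.getD_eq_getElem?_getD, Nat.add_zero] <;> simp <;> omega

lemma occAt211_iff (w : List ℕ) (i : ℕ) :
    OccAt [2,1,1] w i ↔ i + 3 ≤ w.length ∧ w.getD (i+1) 0 = w.getD (i+2) 0 ∧
      w.getD (i+1) 0 < w.getD i 0 := by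
  simp only [List.getD_eq_getElem?_getD]
  constructor
  · rintro ⟨hl, h⟩
    refine ⟨by simpa using hl, ?_, ?_⟩
    · have h12 := h 1 (by norm_num) 2 (by norm_num)
      have h21 := h 2 (by norm_num) 1 (by norm_num)
      simp [List.getD_eq_getElem?_getD] at h12 h21
      omega
    · have h10 := h 1 (by norm_num) 0 (by norm_num)
      simp [List.getD_eq_getElem?_getD] at h10
      omega
  · rintro ⟨hl, h1, h2⟩
    refine ⟨by simpa using hl, ?_⟩
    intro s hs t ht
    simp only [List.length_cons, List.length_nil] at hs ht
    interval_cases s <;> interval_cases t <;>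
      simp only [List.getD_eq_getElem?_getD, Nat.add_zero] <;> simp <;> omega

lemma occAt_cons (τ : List ℕ) (a : ℕ) (w : List ℕ) (i : ℕ) :
    OccAt τ (a :: w) (i + 1) ↔ OccAt τ w i := by
  unfold OccAt
  have hg : ∀ s : ℕ, (a :: w).getD (i + 1 + s) 0 = w.getD (i + s) 0 := by
    intro s
    rw [Nat.add_right_comm]
    rfl
  constructor
  · rintro ⟨hl, h⟩
    refine ⟨by simpa [Nat.add_right_comm] using hl, ?_⟩
    intro s hs t ht
    have := h s hs t ht
    rwa [hg, hg] at this
  · rintro ⟨hl, h⟩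
    refine ⟨by simp [Nat.add_right_comm]; omega, ?_⟩
    intro s hs t ht
    rw [hg, hg]
    exact h s hs t ht

lemma occ_finite (τ w : List ℕ) (hτ : τ ≠ []) : {i | OccAt τ w i}.Finite := by
  apply Set.Finite.subset (Set.finite_Iio w.length)
  intro i hi
  have h1 := hi.1
  have : 1 ≤ τ.length := List.length_pos_iff.mpr hτ
  simp only [Set.mem_Iio]
  omega

lemma occ_shift (τ : List ℕ) (a : ℕ) (w : List ℕ) :
    {i | OccAt τ (a :: w) i} ∩ {i | 0 < i} = Nat.succ '' {i | OccAt τ w i} := by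
  ext i
  cases i with
  | zero => simp
  | succ n =>
    simp only [Set.mem_inter_iff, Set.mem_setOf_eq, Set.mem_image]
    constructor
    · intro h
      exact ⟨n, (occAt_cons τ a w n).mp h.1, rfl⟩
    · rintro ⟨j, hj, hje⟩
      obtain rfl : j = n := Nat.succ_injective hje
      exact ⟨(occAt_cons τ a w j).mpr hj, Nat.succ_pos j⟩

lemma numOcc_cons_pos (τ : List ℕ) (a : ℕ) (w : List ℕ) (hτ : τ ≠ [])
    (h : OccAt τ (a :: w) 0) : numOcc τ (a :: w) = 1 + numOcc τ w := by
  have hset : {i | OccAt τ (a :: w) i} = insert 0 (Nat.succ '' {i | OccAt τ w i}) := by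
    rw [← occ_shift τ a w]
    ext i
    cases i with
    | zero => simpa using h
    | succ n => simp [Nat.succ_pos]
  unfold numOcc
  rw [hset, Set.ncard_insert_of_notMem (by simp) ((occ_finite τ w hτ).image Nat.succ),
    Set.ncard_image_of_injective _ Nat.succ_injective]
  omega

lemma numOcc_cons_neg (τ : List ℕ) (a : ℕ) (w : List ℕ)
    (h : ¬ OccAt τ (a :: w) 0) : numOcc τ (a :: w) = numOcc τ w := by
  have hset : {i | OccAt τ (a :: w) i} = Nat.succ '' {i | OccAt τ w i} := by
    rw [← occ_shift τ a w]
    ext i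
    cases i with
    | zero => simpa using h
    | succ n => simp [Nat.succ_pos]
  unfold numOcc
  rw [hset, Set.ncard_image_of_injective _ Nat.succ_injective]

lemma numOcc_eq_c221 (w : List ℕ) : numOcc [2,2,1] w = c221 w := by
  have hsmall : ∀ v : List ℕ, v.length < 3 → numOcc [2,2,1] v = 0 := by
    intro v hv
    unfold numOcc
    rw [Set.ncard_eq_zero (occ_finite _ _ (by simp))]
    ext i
    simp only [Set.mem_setOf_eq, Set.mem_empty_iff_false, iff_false]
    intro h
    have := h.1
    simp at this
    omega
  induction w with
  | nil => simp [hsmall, c221]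
  | cons a w ih =>
    match w, ih with
    | [], _ => exact hsmall [a] (by simp)
    | [b], _ => exact hsmall [a, b] (by simp)
    | b :: c :: t, ih =>
      have hocc : OccAt [2,2,1] (a :: b :: c :: t) 0 ↔ (a = b ∧ c < b) := by
        rw [occAt221_iff]
        simp [List.getD]
      show _ = c221 (a :: b :: c :: t)
      unfold c221
      by_cases h : a = b ∧ c < b
      · rw [numOcc_cons_pos _ _ _ (by simp) (hocc.mpr h), ih, if_pos h]
      · rw [numOcc_cons_neg _ _ _ (fun hh => h (hocc.mp hh)), ih, if_neg h]
        omega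

lemma numOcc_eq_c211 (w : List ℕ) : numOcc [2,1,1] w = c211 w := by
  have hsmall : ∀ v : List ℕ, v.length < 3 → numOcc [2,1,1] v = 0 := by
    intro v hv
    unfold numOcc
    rw [Set.ncard_eq_zero (occ_finite _ _ (by simp))]
    ext i
    simp only [Set.mem_setOf_eq, Set.mem_empty_iff_false, iff_false]
    intro h
    have := h.1
    simp at this
    omega
  induction w with
  | nil => simp [hsmall, c211]
  | cons a w ih =>
    match w, ih with
    | [], _ => exact hsmall [a] (by simp)
    | [b], _ => exact hsmall [a, b] (by simp)
    | b :: c :: t, ih =>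
      have hocc : OccAt [2,1,1] (a :: b :: c :: t) 0 ↔ (b = c ∧ b < a) := by
        rw [occAt211_iff]
        simp [List.getD]
      show _ = c211 (a :: b :: c :: t)
      unfold c211
      by_cases h : b = c ∧ b < a
      · rw [numOcc_cons_pos _ _ _ (by simp) (hocc.mpr h), ih, if_pos h]
      · rw [numOcc_cons_neg _ _ _ (fun hh => h (hocc.mp hh)), ih, if_neg h]
        omega

/- ## blocks -/

def unblocks (L : List (ℕ × ℕ)) : List ℕ :=
  L.flatMap (fun p => List.replicate p.2 p.1)

def blocks : List ℕ → List (ℕ × ℕ)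
  | [] => []
  | a :: l =>
    match blocks l with
    | [] => [(a, 1)]
    | (b, k) :: t => if a = b then (b, k + 1) :: t else (a, 1) :: (b, k) :: t

lemma unblocks_nil : unblocks [] = [] := rfl

lemma unblocks_cons (p : ℕ × ℕ) (T : List (ℕ × ℕ)) :
    unblocks (p :: T) = List.replicate p.2 p.1 ++ unblocks T := rfl

lemma blocks_cons_eq_match (a : ℕ) (l : List ℕ) :
    blocks (a :: l) = match blocks l with
      | [] => [(a, 1)]
      | (b, k) :: t => if a = b then (b, k + 1) :: t else (a, 1) :: (b, k) :: t := rfl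

lemma blocks_cons_same (a k : ℕ) (t : List (ℕ × ℕ)) (l : List ℕ)
    (h : blocks l = (a, k) :: t) : blocks (a :: l) = (a, k + 1) :: t := by
  rw [blocks_cons_eq_match, h]
  simp

lemma blocks_cons_new (a : ℕ) (l : List ℕ)
    (h : l = [] ∨ ∃ b k t, blocks l = (b, k) :: t ∧ a ≠ b) :
    blocks (a :: l) = (a, 1) :: blocks l := by
  rcases h with rfl | ⟨b, k, t, hb, hab⟩
  · rfl
  · rw [blocks_cons_eq_match, hb]
    simp [hab]

lemma blocks_nil_iff (l : List ℕ) : blocks l = [] ↔ l = [] := by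
  constructor
  · intro h
    cases l with
    | nil => rfl
    | cons a l =>
      rw [blocks_cons_eq_match] at h
      rcases hb : blocks l with _ | ⟨⟨b, k⟩, t⟩ <;> rw [hb] at h <;> simp at h
      split at h <;> simp at h
  · rintro rfl; rfl

lemma blocks_cons_head (a : ℕ) (l : List ℕ) :
    ∃ k t, blocks (a :: l) = (a, k) :: t ∧ 1 ≤ k := by
  rw [blocks_cons_eq_match]
  rcases hb : blocks l with _ | ⟨⟨b, k⟩, t⟩
  · exact ⟨1, [], rfl, le_refl 1⟩
  · by_cases hab : a = b
    · subst hab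
      simp only [if_pos rfl]
      exact ⟨k + 1, t, rfl, by omega⟩
    · simp only [if_neg hab]
      exact ⟨1, (b, k) :: t, rfl, le_refl 1⟩

lemma unblocks_blocks (w : List ℕ) : unblocks (blocks w) = w := by
  induction w with
  | nil => rfl
  | cons a l ih =>
    rcases hb : blocks l with _ | ⟨⟨b, k⟩, t⟩
    · have : l = [] := (blocks_nil_iff l).mp hb
      subst this
      rfl
    · rw [hb] at ih
      by_cases hab : a = b
      · subst hab
        rw [blocks_cons_same a k t l hb]
        rw [unblocks_cons] at ih ⊢
        simp only [List.replicate_succ] at *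
        simpa using ih
      · rw [blocks_cons_new a l (Or.inr ⟨b, k, t, hb, hab⟩), hb]
        rw [unblocks_cons]
        simpa using ih

lemma blocks_pos (w : List ℕ) : ∀ p ∈ blocks w, 1 ≤ p.2 := by
  induction w with
  | nil => simp [blocks]
  | cons a l ih =>
    rcases hb : blocks l with _ | ⟨⟨b, k⟩, t⟩
    · have : l = [] := (blocks_nil_iff l).mp hb
      subst this
      simp [blocks]
    · rw [hb] at ih
      by_cases hab : a = b
      · subst hab
        rw [blocks_cons_same a k t l hb]
        intro p hp
        rcases List.mem_cons.mp hp with rfl | hp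
        · simp
        · exact ih p (List.mem_cons_of_mem _ hp)
      · rw [blocks_cons_new a l (Or.inr ⟨b, k, t, hb, hab⟩), hb]
        intro p hp
        rcases List.mem_cons.mp hp with rfl | hp
        · simp
        · exact ih p hp

lemma blocks_chain (w : List ℕ) : (blocks w).Chain' (fun p q => p.1 ≠ q.1) := by
  induction w with
  | nil => simp [blocks, List.Chain']
  | cons a l ih =>
    rcases hb : blocks l with _ | ⟨⟨b, k⟩, t⟩
    · have : l = [] := (blocks_nil_iff l).mp hb
      subst this
      simp [blocks, List.Chain']
    · rw [hb] at ih
      by_cases hab : a = b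
      · subst hab
        rw [blocks_cons_same a k t l hb]
        rcases t with _ | ⟨q, t⟩
        · simp [List.Chain']
        · simp only [List.Chain', List.isChain_cons_cons] at ih ⊢
          exact ih
      · rw [blocks_cons_new a l (Or.inr ⟨b, k, t, hb, hab⟩), hb]
        exact List.isChain_cons_cons.mpr ⟨hab, ih⟩

lemma blocks_replicate_append (a k : ℕ) (v : List ℕ)
    (h : v = [] ∨ ∃ b k' t, blocks v = (b, k') :: t ∧ a ≠ b) :
    blocks (List.replicate (k + 1) a ++ v) = (a, k + 1) :: blocks v := by
  induction k with
  | zero => simpa using blocks_cons_new a v h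
  | succ k ih =>
    have : List.replicate (k + 1 + 1) a ++ v = a :: (List.replicate (k + 1) a ++ v) := by
      simp [List.replicate_succ]
    rw [this]
    exact blocks_cons_same a (k + 1) (blocks v) _ ih

lemma blocks_unblocks (L : List (ℕ × ℕ)) (hpos : ∀ p ∈ L, 1 ≤ p.2)
    (hch : L.Chain' (fun p q => p.1 ≠ q.1)) : blocks (unblocks L) = L := by
  induction L with
  | nil => rfl
  | cons p T ih =>
    obtain ⟨a, m⟩ := p
    have hm : 1 ≤ m := hpos (a, m) (by simp)
    have hT : ∀ q ∈ T, 1 ≤ q.2 := fun q hq => hpos q (List.mem_cons_of_mem _ hq)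
    have hchT : T.Chain' (fun p q => p.1 ≠ q.1) := (List.isChain_cons.mp hch).2
    have ihT := ih hT hchT
    rw [unblocks_cons]
    obtain ⟨m', rfl⟩ : ∃ m', m = m' + 1 := ⟨m - 1, by omega⟩
    have hside : unblocks T = [] ∨ ∃ b k' t, blocks (unblocks T) = (b, k') :: t ∧ a ≠ b := by
      rcases T with _ | ⟨⟨b, j⟩, T'⟩
      · left; rfl
      · right
        rw [ihT]
        refine ⟨b, j, T', rfl, ?_⟩
        have := List.isChain_cons_cons.mp hch
        exact this.1
    rw [blocks_replicate_append a m' (unblocks T) hside, ihT]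

/- ## the transformation on blocks -/

def revLen (c : List (ℕ × ℕ)) : List (ℕ × ℕ) :=
  (c.map Prod.fst).zip ((c.map Prod.snd).reverse)

lemma map_fst_revLen (c : List (ℕ × ℕ)) : (revLen c).map Prod.fst = c.map Prod.fst :=
  List.map_fst_zip (by simp)

lemma map_snd_revLen (c : List (ℕ × ℕ)) : (revLen c).map Prod.snd = (c.map Prod.snd).reverse :=
  List.map_snd_zip (by simp)

lemma revLen_revLen (c : List (ℕ × ℕ)) : revLen (revLen c) = c := by
  have h1 : (revLen (revLen c)).map Prod.fst = c.map Prod.fst := by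
    rw [map_fst_revLen, map_fst_revLen]
  have h2 : (revLen (revLen c)).map Prod.snd = c.map Prod.snd := by
    rw [map_snd_revLen, map_snd_revLen, List.reverse_reverse]
  rw [List.zip_of_prod h1 h2]
  exact (List.zip_of_prod rfl rfl).symm

lemma revLen_ne_nil (c : List (ℕ × ℕ)) (h : c ≠ []) : revLen c ≠ [] := by
  intro hh
  have := congrArg (List.map Prod.fst) hh
  rw [map_fst_revLen] at this
  simp at this
  exact h this

def dTake : List (ℕ × ℕ) → List (ℕ × ℕ)
  | [] => []
  | [p] => [p]
  | p :: q :: T => if q.1 < p.1 then p :: dTake (q :: T) else [p]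

def dDrop : List (ℕ × ℕ) → List (ℕ × ℕ)
  | [] => []
  | [_] => []
  | p :: q :: T => if q.1 < p.1 then dDrop (q :: T) else q :: T

lemma dDrop_length (L : List (ℕ × ℕ)) (h : L ≠ []) : (dDrop L).length < L.length := by
  induction L with
  | nil => simp at h
  | cons p T ih =>
    rcases T with _ | ⟨q, T'⟩
    · simp [dDrop]
    · show (if q.1 < p.1 then dDrop (q :: T') else q :: T').length < _
      split
      · have := ih (by simp)
        simp only [List.length_cons] at *
        omega
      · simp

def F_B (L : List (ℕ × ℕ)) : List (ℕ × ℕ) :=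
  if h : L = [] then [] else revLen (dTake L) ++ F_B (dDrop L)
  termination_by L.length
  decreasing_by exact dDrop_length L h

lemma F_B_nil : F_B [] = [] := by rw [F_B]; simp

lemma F_B_eq (L : List (ℕ × ℕ)) (h : L ≠ []) :
    F_B L = revLen (dTake L) ++ F_B (dDrop L) := by
  rw [F_B]; simp [h]

lemma dTake_cons (p : ℕ × ℕ) (T : List (ℕ × ℕ)) : ∃ t, dTake (p :: T) = p :: t := by
  rcases T with _ | ⟨q, T'⟩
  · exact ⟨[], rfl⟩
  · show ∃ t, (if q.1 < p.1 then p :: dTake (q :: T') else [p]) = p :: t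
    split
    · exact ⟨dTake (q :: T'), rfl⟩
    · exact ⟨[], rfl⟩

lemma dTake_ne_nil (L : List (ℕ × ℕ)) (h : L ≠ []) : dTake L ≠ [] := by
  rcases L with _ | ⟨p, T⟩
  · simp at h
  · obtain ⟨t, ht⟩ := dTake_cons p T
    simp [ht]

lemma dTake_append_dDrop (L : List (ℕ × ℕ)) : dTake L ++ dDrop L = L := by
  induction L with
  | nil => rfl
  | cons p T ih =>
    rcases T with _ | ⟨q, T'⟩
    · rfl
    · show (if q.1 < p.1 then p :: dTake (q :: T') else [p]) ++
        (if q.1 < p.1 then dDrop (q :: T') else q :: T') = p :: q :: T'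
      split
      · simpa using ih
      · rfl

lemma dTake_chain (L : List (ℕ × ℕ)) : (dTake L).Chain' (fun p q => q.1 < p.1) := by
  induction L with
  | nil => simp [dTake, List.Chain']
  | cons p T ih =>
    rcases T with _ | ⟨q, T'⟩
    · simp [dTake, List.Chain']
    · show ((if q.1 < p.1 then p :: dTake (q :: T') else [p]).Chain' _)
      split
      · obtain ⟨t, ht⟩ := dTake_cons q T'
        unfold List.Chain'
        rw [List.isChain_cons]
        refine ⟨?_, ih⟩
        intro y hy
        rw [ht] at hy
        simp at hy
        subst hy
        assumption
      · simp [List.Chain']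

lemma dTake_dDrop_bd (L : List (ℕ × ℕ)) :
    ∀ x y, ((dTake L).map Prod.fst).getLast? = some x →
      ((dDrop L).map Prod.fst).head? = some y → ¬ y < x := by
  induction L with
  | nil => simp [dTake, dDrop]
  | cons p T ih =>
    rcases T with _ | ⟨q, T'⟩
    · simp [dTake, dDrop]
    · intro x y hx hy
      by_cases h : q.1 < p.1
      · have hT : dTake (p :: q :: T') = p :: dTake (q :: T') := by
          show (if q.1 < p.1 then p :: dTake (q :: T') else [p]) = _
          rw [if_pos h]
        have hD : dDrop (p :: q :: T') = dDrop (q :: T') := by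
          show (if q.1 < p.1 then dDrop (q :: T') else q :: T') = _
          rw [if_pos h]
        rw [hT] at hx
        rw [hD] at hy
        obtain ⟨t, ht⟩ := dTake_cons q T'
        rw [List.map_cons, ht, List.map_cons, List.getLast?_cons_cons, ← List.map_cons, ← ht] at hx
        exact ih x y hx hy
      · have hT : dTake (p :: q :: T') = [p] := by
          show (if q.1 < p.1 then p :: dTake (q :: T') else [p]) = _
          rw [if_neg h]
        have hD : dDrop (p :: q :: T') = q :: T' := by
          show (if q.1 < p.1 then dDrop (q :: T') else q :: T') = _
          rw [if_neg h]
        rw [hT] at hx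
        rw [hD] at hy
        simp at hx hy
        subst hx; subst hy
        exact h

/- ## block-level pattern counts -/

def b221 : List (ℕ × ℕ) → ℕ
  | p :: q :: T => (if 2 ≤ p.2 ∧ q.1 < p.1 then 1 else 0) + b221 (q :: T)
  | _ => 0

def b211 : List (ℕ × ℕ) → ℕ
  | p :: q :: T => (if 2 ≤ q.2 ∧ q.1 < p.1 then 1 else 0) + b211 (q :: T)
  | _ => 0

lemma b221_cc (p q : ℕ × ℕ) (T : List (ℕ × ℕ)) :
    b221 (p :: q :: T) = (if 2 ≤ p.2 ∧ q.1 < p.1 then 1 else 0) + b221 (q :: T) := rfl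

lemma b211_cc (p q : ℕ × ℕ) (T : List (ℕ × ℕ)) :
    b211 (p :: q :: T) = (if 2 ≤ q.2 ∧ q.1 < p.1 then 1 else 0) + b211 (q :: T) := rfl

lemma b221_append (c r : List (ℕ × ℕ))
    (hbd : ∀ x y, ((c.map Prod.fst).getLast? = some x) →
      ((r.map Prod.fst).head? = some y) → ¬ y < x) :
    b221 (c ++ r) = b221 c + b221 r := by
  induction c with
  | nil => simp [b221]
  | cons p c' ih =>
    rcases c' with _ | ⟨p', c''⟩
    · rcases r with _ | ⟨q, r'⟩
      · simp [b221]
      · have h := hbd p.1 q.1 (by simp) (by simp)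
        rw [List.singleton_append, b221_cc, if_neg (by tauto)]
        simp [b221]
    · rw [List.cons_append, List.cons_append, b221_cc, ← List.cons_append]
      rw [ih (by intro x y hx hy; exact hbd x y (by simpa using hx) hy)]
      rw [b221_cc]
      omega

lemma b211_append (c r : List (ℕ × ℕ))
    (hbd : ∀ x y, ((c.map Prod.fst).getLast? = some x) →
      ((r.map Prod.fst).head? = some y) → ¬ y < x) :
    b211 (c ++ r) = b211 c + b211 r := by
  induction c with
  | nil => simp [b211]
  | cons p c' ih =>
    rcases c' with _ | ⟨p', c''⟩
    · rcases r with _ | ⟨q, r'⟩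
      · simp [b211]
      · have h := hbd p.1 q.1 (by simp) (by simp)
        rw [List.singleton_append, b211_cc, if_neg (by tauto)]
        simp [b211]
    · rw [List.cons_append, List.cons_append, b211_cc, ← List.cons_append]
      rw [ih (by intro x y hx hy; exact hbd x y (by simpa using hx) hy)]
      rw [b211_cc]
      omega

lemma b221_chain (c : List (ℕ × ℕ)) (h : c.Chain' (fun p q => q.1 < p.1)) :
    b221 c = c.dropLast.countP (fun p => decide (2 ≤ p.2)) := by
  induction c with
  | nil => simp [b221]
  | cons p c' ih =>
    rcases c' with _ | ⟨q, c''⟩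
    · simp [b221]
    · have hq : q.1 < p.1 := (List.isChain_cons_cons.mp h).1
      rw [b221_cc, List.dropLast_cons₂, List.countP_cons, ih (List.isChain_cons_cons.mp h).2]
      by_cases h2 : 2 ≤ p.2 <;> simp [h2, hq] <;> omega

lemma b211_chain (c : List (ℕ × ℕ)) (h : c.Chain' (fun p q => q.1 < p.1)) :
    b211 c = (c.drop 1).countP (fun p => decide (2 ≤ p.2)) := by
  induction c with
  | nil => simp [b211]
  | cons p c' ih =>
    rcases c' with _ | ⟨q, c''⟩
    · simp [b211]
    · have hq : q.1 < p.1 := (List.isChain_cons_cons.mp h).1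
      rw [b211_cc, ih (List.isChain_cons_cons.mp h).2]
      show _ = List.countP _ (q :: c'')
      rw [List.countP_cons]
      have hd : List.drop 1 (q :: c'') = c'' := rfl
      rw [hd]
      by_cases h2 : 2 ≤ q.2 <;> simp [h2, hq] <;> omega

lemma chain'_desc_revLen (c : List (ℕ × ℕ)) (h : c.Chain' (fun p q => q.1 < p.1)) :
    (revLen c).Chain' (fun p q => q.1 < p.1) := by
  have h1 : ((c.map Prod.fst).Chain' (fun a b => b < a)) := (List.isChain_map _).mpr h
  have h2 : (((revLen c).map Prod.fst).Chain' (fun a b => b < a)) := by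
    rw [map_fst_revLen]; exact h1
  exact (List.isChain_map _).mp h2

lemma countP_snd (l : List (ℕ × ℕ)) :
    l.countP (fun p => decide (2 ≤ p.2)) = (l.map Prod.snd).countP (fun k => decide (2 ≤ k)) := by
  rw [List.countP_map]
  rfl

lemma b211_revLen (c : List (ℕ × ℕ)) (h : c.Chain' (fun p q => q.1 < p.1)) :
    b211 (revLen c) = b221 c := by
  rw [b211_chain _ (chain'_desc_revLen c h), b221_chain _ h, countP_snd, countP_snd,
    List.map_drop, List.map_dropLast, map_snd_revLen, List.drop_one,
    List.tail_reverse, List.countP_reverse]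

lemma b221_revLen (c : List (ℕ × ℕ)) (h : c.Chain' (fun p q => q.1 < p.1)) :
    b221 (revLen c) = b211 c := by
  rw [b221_chain _ (chain'_desc_revLen c h), b211_chain _ h, countP_snd, countP_snd,
    List.map_drop, List.map_dropLast, map_snd_revLen]
  have hrev : (c.map Prod.snd).reverse.dropLast = ((c.map Prod.snd).tail).reverse := by
    have h2 := List.tail_reverse (l := (c.map Prod.snd).reverse)
    rw [List.reverse_reverse] at h2
    rw [h2, List.reverse_reverse]
  rw [hrev, List.countP_reverse, List.drop_one]

lemma dSplit_eq (c r : List (ℕ × ℕ)) (hc : c ≠ [])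
    (hch : c.Chain' (fun p q => q.1 < p.1))
    (hbd : ∀ x y, ((c.map Prod.fst).getLast? = some x) →
      ((r.map Prod.fst).head? = some y) → ¬ y < x) :
    dTake (c ++ r) = c ∧ dDrop (c ++ r) = r := by
  induction c with
  | nil => simp at hc
  | cons p c' ih =>
    rcases c' with _ | ⟨p', c''⟩
    · rcases r with _ | ⟨q, r'⟩
      · exact ⟨rfl, rfl⟩
      · have h := hbd p.1 q.1 (by simp) (by simp)
        constructor
        · show (if q.1 < p.1 then p :: dTake (q :: r') else [p]) = [p]
          rw [if_neg h]
        · show (if q.1 < p.1 then dDrop (q :: r') else q :: r') = q :: r'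
          rw [if_neg h]
    · have hpp : p'.1 < p.1 := (List.isChain_cons_cons.mp hch).1
      have ihh := ih (by simp) (List.isChain_cons_cons.mp hch).2
        (by intro x y hx hy; exact hbd x y (by simpa using hx) hy)
      constructor
      · show (if p'.1 < p.1 then p :: dTake (p' :: (c'' ++ r)) else [p]) = _
        rw [if_pos hpp]
        rw [show p' :: (c'' ++ r) = (p' :: c'') ++ r from rfl, ihh.1]
      · show (if p'.1 < p.1 then dDrop (p' :: (c'' ++ r)) else p' :: (c'' ++ r)) = r
        rw [if_pos hpp]
        rw [show p' :: (c'' ++ r) = (p' :: c'') ++ r from rfl, ihh.2]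

lemma F_B_map_fst (L : List (ℕ × ℕ)) : (F_B L).map Prod.fst = L.map Prod.fst := by
  induction L using F_B.induct with
  | case1 => simp [F_B_nil]
  | case2 L h ih =>
    rw [F_B_eq L h, List.map_append, map_fst_revLen, ih, ← List.map_append,
      dTake_append_dDrop]

lemma F_B_snd_sum (L : List (ℕ × ℕ)) :
    ((F_B L).map Prod.snd).sum = (L.map Prod.snd).sum := by
  induction L using F_B.induct with
  | case1 => simp [F_B_nil]
  | case2 L h ih =>
    rw [F_B_eq L h, List.map_append, List.sum_append, map_snd_revLen, List.sum_reverse, ih,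
      ← List.sum_append, ← List.map_append, dTake_append_dDrop]

lemma F_B_snd_mem (L : List (ℕ × ℕ)) (x : ℕ) (hx : x ∈ (F_B L).map Prod.snd) :
    x ∈ L.map Prod.snd := by
  induction L using F_B.induct with
  | case1 => simpa [F_B_nil] using hx
  | case2 L h ih =>
    rw [F_B_eq L h, List.map_append, List.mem_append, map_snd_revLen, List.mem_reverse] at hx
    rw [← dTake_append_dDrop L, List.map_append, List.mem_append]
    rcases hx with hx | hx
    · exact Or.inl hx
    · exact Or.inr (ih hx)

lemma F_B_boundary (L : List (ℕ × ℕ)) (h : L ≠ []) :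
    ∀ x y, (((revLen (dTake L)).map Prod.fst).getLast? = some x) →
      (((F_B (dDrop L)).map Prod.fst).head? = some y) → ¬ y < x := by
  intro x y hx hy
  rw [map_fst_revLen] at hx
  rw [F_B_map_fst] at hy
  exact dTake_dDrop_bd L x y hx hy

lemma F_B_invol (L : List (ℕ × ℕ)) : F_B (F_B L) = L := by
  induction L using F_B.induct with
  | case1 => simp [F_B_nil]
  | case2 L h ih =>
    have hc := dTake_ne_nil L h
    have hsplit := dSplit_eq (revLen (dTake L)) (F_B (dDrop L)) (revLen_ne_nil _ hc)
      (chain'_desc_revLen _ (dTake_chain L)) (F_B_boundary L h)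
    rw [F_B_eq L h]
    rw [F_B_eq _ (by simp [revLen_ne_nil _ hc]), hsplit.1, hsplit.2, revLen_revLen, ih,
      dTake_append_dDrop]

lemma F_B_b211 (L : List (ℕ × ℕ)) : b211 (F_B L) = b221 L := by
  induction L using F_B.induct with
  | case1 => rw [F_B_nil]; rfl
  | case2 L h ih =>
    rw [F_B_eq L h, b211_append _ _ (F_B_boundary L h),
      b211_revLen _ (dTake_chain L), ih]
    conv_rhs => rw [← dTake_append_dDrop L]
    rw [b221_append _ _ (fun x y hx hy => dTake_dDrop_bd L x y hx hy)]

lemma F_B_b221 (L : List (ℕ × ℕ)) : b221 (F_B L) = b211 L := by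
  induction L using F_B.induct with
  | case1 => rw [F_B_nil]; rfl
  | case2 L h ih =>
    rw [F_B_eq L h, b221_append _ _ (F_B_boundary L h),
      b221_revLen _ (dTake_chain L), ih]
    conv_rhs => rw [← dTake_append_dDrop L]
    rw [b211_append _ _ (fun x y hx hy => dTake_dDrop_bd L x y hx hy)]

/- ## letter-level counts vs block-level counts -/

lemma c221_cc (a b c : ℕ) (t : List ℕ) :
    c221 (a :: b :: c :: t) = (if a = b ∧ c < b then 1 else 0) + c221 (b :: c :: t) := rfl

lemma c211_cc (a b c : ℕ) (t : List ℕ) :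
    c211 (a :: b :: c :: t) = (if b = c ∧ b < a then 1 else 0) + c211 (b :: c :: t) := rfl

lemma c221_cons_ne (x y : ℕ) (v : List ℕ) (h : x ≠ y) :
    c221 (x :: y :: v) = c221 (y :: v) := by
  rcases v with _ | ⟨c, t⟩
  · rfl
  · rw [c221_cc, if_neg (by tauto), Nat.zero_add]

lemma c221_rep (x y : ℕ) (v : List ℕ) (h : x ≠ y) :
    ∀ k, c221 (List.replicate (k + 1) x ++ y :: v) =
      (if 1 ≤ k ∧ y < x then 1 else 0) + c221 (y :: v) := by
  intro k
  induction k with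
  | zero => simpa using c221_cons_ne x y v h
  | succ k ih =>
    rcases k with _ | k'
    · have hexp : List.replicate 2 x ++ y :: v = x :: x :: y :: v := by
        simp [List.replicate_succ]
      rw [hexp, c221_cc, c221_cons_ne x y v h]
      simp
    · have hexp : List.replicate (k' + 1 + 2) x ++ y :: v
          = x :: x :: x :: (List.replicate k' x ++ y :: v) := by
        simp [List.replicate_succ]
      rw [hexp, c221_cc, if_neg (by simp), Nat.zero_add]
      have heq : List.replicate (k' + 1 + 1) x ++ y :: v
          = x :: x :: (List.replicate k' x ++ y :: v) := by
        simp [List.replicate_succ]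
      rw [← heq, ih]
      congr 1
      by_cases hy : y < x <;> simp [hy]

lemma c221_replicate (x : ℕ) : ∀ k, c221 (List.replicate k x) = 0 := by
  intro k
  induction k using Nat.strong_induction_on with
  | _ k ih =>
    match k with
    | 0 => rfl
    | 1 => rfl
    | 2 => simp [c221, List.replicate]
    | (m + 3) =>
      have : List.replicate (m + 3) x = x :: x :: x :: List.replicate m x := by
        simp [List.replicate_succ]
      rw [this, c221_cc, if_neg (by simp)]
      have h2 : (x :: x :: List.replicate m x) = List.replicate (m + 2) x := by
        simp [List.replicate_succ]
      rw [h2, ih (m + 2) (by omega)]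

lemma c211_replicate (x : ℕ) : ∀ k, c211 (List.replicate k x) = 0 := by
  intro k
  induction k using Nat.strong_induction_on with
  | _ k ih =>
    match k with
    | 0 => rfl
    | 1 => rfl
    | 2 => simp [c211, List.replicate]
    | (m + 3) =>
      have : List.replicate (m + 3) x = x :: x :: x :: List.replicate m x := by
        simp [List.replicate_succ]
      rw [this, c211_cc, if_neg (by simp)]
      have h2 : (x :: x :: List.replicate m x) = List.replicate (m + 2) x := by
        simp [List.replicate_succ]
      rw [h2, ih (m + 2) (by omega)]

lemma c211_rep (x y : ℕ) (v : List ℕ) :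
    ∀ k, c211 (List.replicate (k + 1) x ++ y :: v) = c211 (x :: y :: v) := by
  intro k
  induction k with
  | zero => simp
  | succ k ih =>
    have hexp : List.replicate (k + 2) x ++ y :: v
        = x :: (List.replicate (k + 1) x ++ y :: v) := by
      simp [List.replicate_succ]
    rw [hexp]
    have hexp2 : List.replicate (k + 1) x ++ y :: v
        = x :: (List.replicate k x ++ y :: v) := by
      simp [List.replicate_succ]
    rw [hexp2]
    rcases hrest : List.replicate k x ++ y :: v with _ | ⟨c, t⟩
    · simp at hrest
    · rw [c211_cc, if_neg (by simp), Nat.zero_add, ← hrest, ← hexp2, ih]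

lemma c211_head (x y : ℕ) (v : List ℕ) :
    c211 (x :: y :: v) = (if v.head? = some y ∧ y < x then 1 else 0) + c211 (y :: v) := by
  rcases v with _ | ⟨c, t⟩
  · simp [c211]
  · rw [c211_cc]
    congr 1
    by_cases h1 : y = c
    · subst h1; simp
    · simp [h1, Ne.symm h1]

lemma unblocks_cons_head (y m : ℕ) (T : List (ℕ × ℕ)) (hm : 1 ≤ m) :
    ∃ v, unblocks ((y, m) :: T) = y :: v ∧ v = List.replicate (m - 1) y ++ unblocks T := by
  obtain ⟨m', rfl⟩ : ∃ m', m = m' + 1 := ⟨m - 1, by omega⟩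
  refine ⟨List.replicate m' y ++ unblocks T, ?_, by simp⟩
  rw [unblocks_cons]
  simp [List.replicate_succ]

lemma c221_unblocks : ∀ (L : List (ℕ × ℕ)), (∀ p ∈ L, 1 ≤ p.2) →
    L.Chain' (fun p q => p.1 ≠ q.1) → c221 (unblocks L) = b221 L := by
  intro L
  induction L with
  | nil => intro _ _; rfl
  | cons p T ih =>
    intro hpos hch
    obtain ⟨x, k⟩ := p
    have hk : 1 ≤ k := hpos (x, k) (by simp)
    rcases T with _ | ⟨⟨y, m⟩, T'⟩
    · rw [show unblocks [(x, k)] = List.replicate k x by simp [unblocks_cons, unblocks_nil]]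
      rw [c221_replicate]
      rfl
    · have hxy : x ≠ y := (List.isChain_cons_cons.mp hch).1
      have hm : 1 ≤ m := hpos (y, m) (by simp)
      obtain ⟨v, hv, _⟩ := unblocks_cons_head y m T' hm
      rw [unblocks_cons, hv]
      obtain ⟨k', rfl⟩ : ∃ k', k = k' + 1 := ⟨k - 1, by omega⟩
      rw [c221_rep x y v hxy k', ← hv,
        ih (fun q hq => hpos q (List.mem_cons_of_mem _ hq)) (List.isChain_cons_cons.mp hch).2,
        b221_cc]
      congr 1
      simp only [show (2 ≤ k' + 1) ↔ (1 ≤ k') by omega]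

lemma c211_unblocks : ∀ (L : List (ℕ × ℕ)), (∀ p ∈ L, 1 ≤ p.2) →
    L.Chain' (fun p q => p.1 ≠ q.1) → c211 (unblocks L) = b211 L := by
  intro L
  induction L with
  | nil => intro _ _; rfl
  | cons p T ih =>
    intro hpos hch
    obtain ⟨x, k⟩ := p
    have hk : 1 ≤ k := hpos (x, k) (by simp)
    rcases T with _ | ⟨⟨y, m⟩, T'⟩
    · rw [show unblocks [(x, k)] = List.replicate k x by simp [unblocks_cons, unblocks_nil]]
      rw [c211_replicate]
      rfl
    · have hxy : x ≠ y := (List.isChain_cons_cons.mp hch).1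
      have hm : 1 ≤ m := hpos (y, m) (by simp)
      obtain ⟨v, hv, hvdef⟩ := unblocks_cons_head y m T' hm
      rw [unblocks_cons, hv]
      obtain ⟨k', rfl⟩ : ∃ k', k = k' + 1 := ⟨k - 1, by omega⟩
      rw [c211_rep x y v k', c211_head, ← hv,
        ih (fun q hq => hpos q (List.mem_cons_of_mem _ hq)) (List.isChain_cons_cons.mp hch).2,
        b211_cc]
      congr 1
      have hhead : v.head? = some y ↔ 2 ≤ m := by
        constructor
        · intro hh
          by_contra hmm
          have hm1 : m = 1 := by omega
          subst hm1
          simp only [Nat.sub_self, List.replicate, List.nil_append] at hvdef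
          subst hvdef
          rcases T' with _ | ⟨⟨z, j⟩, T''⟩
          · simp [unblocks_nil] at hh
          · have hj : 1 ≤ j := hpos (z, j) (by simp)
            obtain ⟨u, hu, _⟩ := unblocks_cons_head z j T'' hj
            rw [hu] at hh
            simp at hh
            exact ((List.isChain_cons_cons.mp hch).2.rel_head (by rw [hh]) ).elim
        · intro hh
          obtain ⟨m'', rfl⟩ : ∃ m'', m = m'' + 2 := ⟨m - 2, by omega⟩
          rw [hvdef]
          simp [List.replicate_succ]
      by_cases hc : y < x
      · by_cases hm2 : 2 ≤ m
        · rw [if_pos ⟨hhead.mpr hm2, hc⟩, if_pos ⟨hm2, hc⟩]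
        · rw [if_neg (fun hh => hm2 (hhead.mp hh.1)), if_neg (fun hh => hm2 hh.1)]
      · rw [if_neg (fun hh => hc hh.2), if_neg (fun hh => hc hh.2)]

/- ## invariance of IsCatalan/IsFlattened under duplicate insertion -/

lemma getD_ins (x : List ℕ) (a : ℕ) (y : List ℕ) (i : ℕ) :
    (x ++ a :: a :: y).getD i 0 =
      (x ++ a :: y).getD (if i ≤ x.length then i else i - 1) 0 := by
  rcases Nat.lt_or_ge i x.length with h | h
  · rw [List.getD_append _ _ _ _ h, if_pos (le_of_lt h), List.getD_append _ _ _ _ h]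
  · rcases Nat.lt_or_ge i (x.length + 2) with h2 | h2
    · rw [List.getD_append_right _ _ _ _ h]
      have h3 : i - x.length = 0 ∨ i - x.length = 1 := by omega
      rcases h3 with h3 | h3
      · rw [h3]
        have hip : i = x.length := by omega
        rw [if_pos (by omega), hip, List.getD_append_right _ _ _ _ (le_refl _), Nat.sub_self]
        rfl
      · rw [h3]
        have hip : i = x.length + 1 := by omega
        rw [if_neg (by omega), hip, show x.length + 1 - 1 = x.length by omega,
          List.getD_append_right _ _ _ _ (le_refl _), Nat.sub_self]
        rfl
    · obtain ⟨j, rfl⟩ : ∃ j, i = x.length + 2 + j := ⟨i - x.length - 2, by omega⟩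
      rw [List.getD_append_right _ _ _ _ (by omega), if_neg (by omega),
        List.getD_append_right _ _ _ _ (by omega),
        show x.length + 2 + j - x.length = j + 2 by omega,
        show x.length + 2 + j - 1 - x.length = j + 1 by omega]
      rfl

lemma isCatalan_dup (x : List ℕ) (a : ℕ) (y : List ℕ) :
    IsCatalan (x ++ a :: a :: y) ↔ IsCatalan (x ++ a :: y) := by
  unfold IsCatalan
  have hlen : (x ++ a :: a :: y).length = (x ++ a :: y).length + 1 := by
    simp only [List.length_append, List.length_cons]; omega
  have hlen2 : x.length < (x ++ a :: y).length := by simp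
  have h0 : (x ++ a :: a :: y).getD 0 0 = (x ++ a :: y).getD 0 0 := by
    rw [getD_ins, if_pos (Nat.zero_le _)]
  constructor
  · rintro ⟨-, h1, h2⟩
    refine ⟨by simp, by rw [← h0]; exact h1, ?_⟩
    intro i hi
    by_cases hip : i < x.length
    · have := h2 i (by omega)
      rwa [getD_ins, getD_ins, if_pos (show i + 1 ≤ x.length by omega),
        if_pos (show i ≤ x.length by omega)] at this
    · have := h2 (i + 1) (by omega)
      rwa [getD_ins, getD_ins, if_neg (show ¬ i + 1 + 1 ≤ x.length by omega),
        if_neg (show ¬ i + 1 ≤ x.length by omega),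
        show i + 1 + 1 - 1 = i + 1 by omega, show i + 1 - 1 = i by omega] at this
  · rintro ⟨-, h1, h2⟩
    refine ⟨by simp, by rw [h0]; exact h1, ?_⟩
    intro i hi
    rw [getD_ins, getD_ins]
    by_cases hip : i + 1 ≤ x.length
    · rw [if_pos hip, if_pos (show i ≤ x.length by omega)]
      exact h2 i (by omega)
    · by_cases hip2 : i = x.length
      · rw [if_neg hip, if_pos (show i ≤ x.length by omega),
          show i + 1 - 1 = i by omega]
        refine ⟨?_, Nat.le_succ _⟩
        rcases Nat.eq_zero_or_pos i with hz | hz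
        · rw [hz, h1]
        · have h3 := h2 (i - 1) (by omega)
          rw [show i - 1 + 1 = i by omega] at h3
          exact h3.1
      · rw [if_neg hip, if_neg (show ¬ i ≤ x.length by omega),
          show i + 1 - 1 = i by omega]
        have := h2 (i - 1) (by omega)
        rwa [show i - 1 + 1 = i by omega] at this

lemma runStart_dup_fwd (x : List ℕ) (a : ℕ) (y : List ℕ) (i : ℕ)
    (h : RunStart (x ++ a :: y) i) :
    RunStart (x ++ a :: a :: y) (if i ≤ x.length then i else i + 1) := by
  obtain ⟨hi, hd⟩ := h
  have hlen : (x ++ a :: a :: y).length = (x ++ a :: y).length + 1 := by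
    simp only [List.length_append, List.length_cons]; omega
  by_cases hip : i ≤ x.length
  · rw [if_pos hip]
    refine ⟨by omega, ?_⟩
    rcases hd with rfl | hd
    · exact Or.inl rfl
    · right
      rw [getD_ins, getD_ins, if_pos hip, if_pos (show i - 1 ≤ x.length by omega)]
      exact hd
  · rw [if_neg hip]
    refine ⟨by omega, ?_⟩
    rcases hd with rfl | hd
    · exact absurd (Nat.zero_le x.length) hip
    · right
      rw [getD_ins, getD_ins, if_neg (show ¬ i + 1 ≤ x.length by omega),
        if_neg (show ¬ i + 1 - 1 ≤ x.length by omega),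
        show i + 1 - 1 = i by omega]
      exact hd

lemma runStart_dup_bwd (x : List ℕ) (a : ℕ) (y : List ℕ) (j : ℕ)
    (h : RunStart (x ++ a :: a :: y) j) :
    j ≠ x.length + 1 ∧
      RunStart (x ++ a :: y) (if j ≤ x.length then j else j - 1) := by
  obtain ⟨hj, hd⟩ := h
  have hlen : (x ++ a :: a :: y).length = (x ++ a :: y).length + 1 := by
    simp only [List.length_append, List.length_cons]; omega
  have hne : j ≠ x.length + 1 := by
    rintro rfl
    rcases hd with hd | hd
    · omega
    · rw [getD_ins, getD_ins, if_neg (by omega),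
        if_pos (show x.length + 1 - 1 ≤ x.length by omega),
        show x.length + 1 - 1 = x.length by omega] at hd
      exact lt_irrefl _ hd
  refine ⟨hne, ?_⟩
  by_cases hjp : j ≤ x.length
  · rw [if_pos hjp]
    refine ⟨by simp; omega, ?_⟩
    rcases hd with rfl | hd
    · exact Or.inl rfl
    · right
      rwa [getD_ins, getD_ins, if_pos hjp, if_pos (show j - 1 ≤ x.length by omega)] at hd
  · rw [if_neg hjp]
    have hj2 : x.length + 2 ≤ j := by omega
    refine ⟨by omega, ?_⟩
    right
    rcases hd with rfl | hd
    · omega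
    · rwa [getD_ins, getD_ins, if_neg hjp, if_neg (show ¬ j - 1 ≤ x.length by omega),
        show j - 1 - 1 = j - 1 - 1 from rfl] at hd

lemma getD_dup_val (x : List ℕ) (a : ℕ) (y : List ℕ) (i : ℕ) :
    (x ++ a :: a :: y).getD (if i ≤ x.length then i else i + 1) 0
      = (x ++ a :: y).getD i 0 := by
  by_cases hip : i ≤ x.length
  · rw [if_pos hip, getD_ins, if_pos hip]
  · rw [if_neg hip, getD_ins, if_neg (show ¬ i + 1 ≤ x.length by omega),
      show i + 1 - 1 = i by omega]

lemma isFlattened_dup (x : List ℕ) (a : ℕ) (y : List ℕ) :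
    IsFlattened (x ++ a :: a :: y) ↔ IsFlattened (x ++ a :: y) := by
  constructor
  · intro H i j hi hj hij
    have hi' := runStart_dup_fwd x a y i hi
    have hj' := runStart_dup_fwd x a y j hj
    have hord : (if i ≤ x.length then i else i + 1) ≤ (if j ≤ x.length then j else j + 1) := by
      split_ifs <;> omega
    have hres := H _ _ hi' hj' hord
    rwa [getD_dup_val, getD_dup_val] at hres
  · intro H i j hi hj hij
    obtain ⟨hne, hrs⟩ := runStart_dup_bwd x a y i hi
    obtain ⟨hne', hrs'⟩ := runStart_dup_bwd x a y j hj
    have hord : (if i ≤ x.length then i else i - 1) ≤ (if j ≤ x.length then j else j - 1) := by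
      split_ifs <;> omega
    have hres := H _ _ hrs hrs' hord
    rwa [getD_ins, getD_ins]

/- ## transporting predicates along plateau-length changes -/

lemma rep_invariance (Q : List ℕ → Prop)
    (hQ : ∀ x a y, Q (x ++ a :: a :: y) ↔ Q (x ++ a :: y)) (z : List ℕ) (a : ℕ) :
    ∀ (k : ℕ) (v : List ℕ), Q (z ++ (List.replicate (k + 1) a ++ v)) ↔ Q (z ++ ([a] ++ v)) := by
  intro k
  induction k with
  | zero => intro v; rfl
  | succ k ih =>
    intro v
    have hexp : z ++ (List.replicate (k + 2) a ++ v) = z ++ (a :: a :: (List.replicate k a ++ v)) := by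
      simp [List.replicate_succ]
    have hexp2 : z ++ (a :: (List.replicate k a ++ v)) = z ++ (List.replicate (k + 1) a ++ v) := by
      simp [List.replicate_succ]
    rw [hexp, show z ++ (a :: a :: (List.replicate k a ++ v))
        = z ++ a :: a :: (List.replicate k a ++ v) from rfl,
      hQ z a (List.replicate k a ++ v),
      show z ++ a :: (List.replicate k a ++ v) = z ++ (a :: (List.replicate k a ++ v)) from rfl,
      hexp2, ih v]

lemma unblocks_invariance (Q : List ℕ → Prop)
    (hQ : ∀ x a y, Q (x ++ a :: a :: y) ↔ Q (x ++ a :: y)) :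
    ∀ (L : List (ℕ × ℕ)), (∀ p ∈ L, 1 ≤ p.2) →
      ∀ z : List ℕ, Q (z ++ unblocks L) ↔ Q (z ++ L.map Prod.fst) := by
  intro L
  induction L with
  | nil => intro _ z; rfl
  | cons p T ih =>
    intro hpos z
    obtain ⟨a, k⟩ := p
    obtain ⟨k', rfl⟩ : ∃ k', k = k' + 1 := ⟨k - 1, by
      have := hpos (a, k) (by simp); omega⟩
    rw [unblocks_cons]
    show Q (z ++ (List.replicate (k' + 1) a ++ unblocks T)) ↔ _
    rw [rep_invariance Q hQ z a k' (unblocks T),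
      show z ++ ([a] ++ unblocks T) = (z ++ [a]) ++ unblocks T by simp,
      ih (fun q hq => hpos q (List.mem_cons_of_mem _ hq)) (z ++ [a])]
    simp

lemma q_unblocks (Q : List ℕ → Prop)
    (hQ : ∀ x a y, Q (x ++ a :: a :: y) ↔ Q (x ++ a :: y))
    (L : List (ℕ × ℕ)) (hpos : ∀ p ∈ L, 1 ≤ p.2) :
    Q (unblocks L) ↔ Q (L.map Prod.fst) := by
  have := unblocks_invariance Q hQ L hpos []
  simpa using this

lemma unblocks_length (L : List (ℕ × ℕ)) :
    (unblocks L).length = (L.map Prod.snd).sum := by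
  induction L with
  | nil => rfl
  | cons p T ih => simp [unblocks_cons, ih]

/- ## the bijection on words -/

def Fmap (w : List ℕ) : List ℕ := unblocks (F_B (blocks w))

lemma F_B_pos (L : List (ℕ × ℕ)) (hpos : ∀ p ∈ L, 1 ≤ p.2) :
    ∀ p ∈ F_B L, 1 ≤ p.2 := by
  intro p hp
  have h1 : p.2 ∈ (F_B L).map Prod.snd := List.mem_map_of_mem hp
  have h2 := F_B_snd_mem L p.2 h1
  obtain ⟨q, hq, hqe⟩ := List.mem_map.mp h2
  rw [← hqe]
  exact hpos q hq

lemma F_B_chain (L : List (ℕ × ℕ)) (hch : L.Chain' (fun p q => p.1 ≠ q.1)) :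
    (F_B L).Chain' (fun p q => p.1 ≠ q.1) := by
  have h1 : (L.map Prod.fst).Chain' (fun a b => a ≠ b) := (List.isChain_map _).mpr hch
  rw [← F_B_map_fst] at h1
  exact (List.isChain_map _).mp h1

lemma Fmap_invol (w : List ℕ) : Fmap (Fmap w) = w := by
  unfold Fmap
  rw [blocks_unblocks (F_B (blocks w)) (F_B_pos _ (blocks_pos w)) (F_B_chain _ (blocks_chain w)),
    F_B_invol, unblocks_blocks]

lemma Fmap_length (w : List ℕ) : (Fmap w).length = w.length := by
  unfold Fmap
  rw [unblocks_length, F_B_snd_sum, ← unblocks_length, unblocks_blocks]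

lemma Fmap_cat (w : List ℕ) : IsCatalan (Fmap w) ↔ IsCatalan w := by
  unfold Fmap
  rw [q_unblocks IsCatalan isCatalan_dup (F_B (blocks w)) (F_B_pos _ (blocks_pos w)),
    F_B_map_fst, ← q_unblocks IsCatalan isCatalan_dup (blocks w) (blocks_pos w),
    unblocks_blocks]

lemma Fmap_flat (w : List ℕ) : IsFlattened (Fmap w) ↔ IsFlattened w := by
  unfold Fmap
  rw [q_unblocks IsFlattened isFlattened_dup (F_B (blocks w)) (F_B_pos _ (blocks_pos w)),
    F_B_map_fst, ← q_unblocks IsFlattened isFlattened_dup (blocks w) (blocks_pos w),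
    unblocks_blocks]

lemma Fmap_c211 (w : List ℕ) : c211 (Fmap w) = c221 w := by
  unfold Fmap
  rw [c211_unblocks (F_B (blocks w)) (F_B_pos _ (blocks_pos w)) (F_B_chain _ (blocks_chain w)),
    F_B_b211, ← c221_unblocks (blocks w) (blocks_pos w) (blocks_chain w), unblocks_blocks]

lemma Fmap_c221 (w : List ℕ) : c221 (Fmap w) = c211 w := by
  unfold Fmap
  rw [c221_unblocks (F_B (blocks w)) (F_B_pos _ (blocks_pos w)) (F_B_chain _ (blocks_chain w)),
    F_B_b221, ← c211_unblocks (blocks w) (blocks_pos w) (blocks_chain w), unblocks_blocks]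

lemma Fmap_flatcat (n : ℕ) (w : List ℕ) (h : w ∈ FlatCat n) : Fmap w ∈ FlatCat n := by
  obtain ⟨hl, hc, hf⟩ := h
  exact ⟨by rw [Fmap_length]; exact hl, (Fmap_cat w).mpr hc, (Fmap_flat w).mpr hf⟩


/-- The consecutive patterns `211` and `221` are equidistributed on flattened
Catalan words of length `n` for every `n ≥ 1`. -/
theorem equidist_211_221 (n : ℕ) (hn : 1 ≤ n) (k : ℕ) :
    {w ∈ FlatCat n | numOcc [2, 1, 1] w = k}.ncard
      = {w ∈ FlatCat n | numOcc [2, 2, 1] w = k}.ncard := by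
  have hinj : Function.Injective Fmap := Function.Involutive.injective Fmap_invol
  have himg : {w ∈ FlatCat n | numOcc [2, 1, 1] w = k}
      = Fmap '' {w ∈ FlatCat n | numOcc [2, 2, 1] w = k} := by
    ext u
    constructor
    · rintro ⟨hu, hocc⟩
      refine ⟨Fmap u, ⟨Fmap_flatcat n u hu, ?_⟩, Fmap_invol u⟩
      rw [numOcc_eq_c221, Fmap_c221, ← numOcc_eq_c211]
      exact hocc
    · rintro ⟨v, ⟨hv, hocc⟩, rfl⟩
      refine ⟨Fmap_flatcat n v hv, ?_⟩
      rw [numOcc_eq_c211, Fmap_c211, ← numOcc_eq_c221]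
      exact hocc
  rw [himg, Set.ncard_image_of_injective _ hinj]
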